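/- Let λ = (λ_1, λ_2) with 0 < λ_1 ≤ λ_2 and let 𝔤_λ be the 6-dimensional oscillator Lie algebra with basis (e_{-1}, e_0, e_1, e_2, ě_1, ě_2) and brackets [e_{-1}, e_j] = λ_j ě_j, [e_j, ě_j] = e_0, [e_{-1}, ě_j] = -λ_j e_j for j = 1, 2, all other brackets of basis elements being zero or determined by antisymmetry. Then the bivector r = e_0 ∧ e_1 + e_2 ∧ ě_1 is a solution of the classical Yang–Baxter equation on 𝔤_λ, and its image Im r = span{e_0, e_1, e_2, ě_1} is a nilpotent (hence unimodular) Lie subalgebra of 𝔤_λ. -/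

import Mathlib

/-- On the 6-dimensional oscillator Lie algebra `𝔤_λ` with basis
`(e₋₁, e₀, e₁, e₂, ě₁, ě₂) = (b 0, b 1, b 2, b 3, b 4, b 5)` and brackets
`[e₋₁, eⱼ] = λⱼ ěⱼ`, `[eⱼ, ěⱼ] = e₀`, `[e₋₁, ěⱼ] = -λⱼ eⱼ` (all other brackets of
basis vectors zero or given by antisymmetry), the bivector `r = e₀ ∧ e₁ + e₂ ∧ ě₁`
(as a map `α ↦ α(e₀)e₁ - α(e₁)e₀ + α(e₂)ě₁ - α(ě₁)e₂`) is a solution of the classical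
Yang–Baxter equation, and `Im r = span{e₀, e₁, e₂, ě₁}` is a nilpotent (hence
unimodular) Lie subalgebra of `𝔤_λ`. -/
theorem oscillator_yang_baxter_solution_with_nilpotent_image
    {L : Type*} [LieRing L] [LieAlgebra ℝ L] [FiniteDimensional ℝ L]
    (lam₁ lam₂ : ℝ) (hlam₁ : 0 < lam₁) (hlam : lam₁ ≤ lam₂)
    (b : Module.Basis (Fin 6) ℝ L)
    -- brackets: b 0 = e₋₁, b 1 = e₀, b 2 = e₁, b 3 = e₂, b 4 = ě₁, b 5 = ě₂
    (h02 : ⁅b 0, b 2⁆ = lam₁ • b 4)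
    (h03 : ⁅b 0, b 3⁆ = lam₂ • b 5)
    (h24 : ⁅b 2, b 4⁆ = b 1)
    (h35 : ⁅b 3, b 5⁆ = b 1)
    (h04 : ⁅b 0, b 4⁆ = -(lam₁ • b 2))
    (h05 : ⁅b 0, b 5⁆ = -(lam₂ • b 3))
    (hcentral : ∀ i : Fin 6, ⁅b 1, b i⁆ = 0)
    (h23 : ⁅b 2, b 3⁆ = 0)
    (h25 : ⁅b 2, b 5⁆ = 0)
    (h34 : ⁅b 3, b 4⁆ = 0)
    (h45 : ⁅b 4, b 5⁆ = 0)
    -- the bivector `r = e₀ ∧ e₁ + e₂ ∧ ě₁`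
    (r : Module.Dual ℝ L →ₗ[ℝ] L)
    (hr : ∀ α : Module.Dual ℝ L,
      r α = α (b 1) • b 2 - α (b 2) • b 1 + α (b 3) • b 4 - α (b 4) • b 3) :
    -- `r` solves the classical Yang–Baxter equation
    (∀ α β γ : Module.Dual ℝ L,
      α ⁅r β, r γ⁆ + β ⁅r γ, r α⁆ + γ ⁅r α, r β⁆ = 0) ∧
    -- `Im r = span{e₀, e₁, e₂, ě₁}` is a nilpotent (hence unimodular) Lie subalgebra
    (∃ S : LieSubalgebra ℝ L,
      S.toSubmodule = LinearMap.range r ∧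
      S.toSubmodule = Submodule.span ℝ {b 1, b 2, b 3, b 4} ∧
      LieRing.IsNilpotent S ∧
      (∀ z : S, LinearMap.trace ℝ S (LieAlgebra.ad ℝ S z) = 0)) := by
  classical
  have h21 : ⁅b 2, b 1⁆ = 0 := by rw [← lie_skew, hcentral 2, neg_zero]
  have h31 : ⁅b 3, b 1⁆ = 0 := by rw [← lie_skew, hcentral 3, neg_zero]
  have h41 : ⁅b 4, b 1⁆ = 0 := by rw [← lie_skew, hcentral 4, neg_zero]
  have h42 : ⁅b 4, b 2⁆ = -b 1 := by rw [← lie_skew, h24]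
  have h32 : ⁅b 3, b 2⁆ = 0 := by rw [← lie_skew, h23, neg_zero]
  have h43 : ⁅b 4, b 3⁆ = 0 := by rw [← lie_skew, h34, neg_zero]
  have key : ∀ β γ : Module.Dual ℝ L,
      ⁅r β, r γ⁆ = (β (b 1) * γ (b 3) - β (b 3) * γ (b 1)) • b 1 := by
    intro β γ
    rw [hr β, hr γ]
    simp only [lie_add, add_lie, lie_sub, sub_lie, lie_smul, smul_lie, h24, h42, h23, h32,
      h34, h43, h21, h31, h41, hcentral 1, hcentral 2, hcentral 3, hcentral 4, lie_self,
      smul_zero, zero_sub, sub_zero, add_zero, zero_add, smul_neg, smul_smul, neg_neg,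
      sub_neg_eq_add]
    module
  constructor
  · intro α β γ
    rw [key, key, key]
    simp only [map_smul, smul_eq_mul]
    ring
  · set p : Submodule ℝ L := Submodule.span ℝ {b 1, b 2, b 3, b 4} with hp
    have hb1 : b 1 ∈ p := Submodule.subset_span (by simp)
    have hb2 : b 2 ∈ p := Submodule.subset_span (by simp)
    have hb3 : b 3 ∈ p := Submodule.subset_span (by simp)
    have hb4 : b 4 ∈ p := Submodule.subset_span (by simp)
    -- b 1 is central in L
    have hb1c : ∀ x : L, ⁅b 1, x⁆ = 0 := by
      intro x
      have h0 : LieAlgebra.ad ℝ L (b 1) = 0 :=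
        b.ext fun i => by simpa [LieAlgebra.ad_apply] using hcentral i
      simpa [LieAlgebra.ad_apply] using LinearMap.congr_fun h0 x
    have hb1c' : ∀ x : L, ⁅x, b 1⁆ = 0 := fun x => by rw [← lie_skew, hb1c, neg_zero]
    -- brackets of p land in span {b 1}
    have hbr : ∀ x ∈ p, ∀ y ∈ p, ⁅x, y⁆ ∈ Submodule.span ℝ {b 1} := by
      intro x hx y hy
      induction hx, hy using Submodule.span_induction₂ with
      | mem_mem u v hu hv =>
        have hu' : u = b 1 ∨ u = b 2 ∨ u = b 3 ∨ u = b 4 := by simpa using hu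
        have hv' : v = b 1 ∨ v = b 2 ∨ v = b 3 ∨ v = b 4 := by simpa using hv
        rcases hu' with rfl | rfl | rfl | rfl <;> rcases hv' with rfl | rfl | rfl | rfl <;>
          simp only [hcentral, h21, h31, h41, h24, h42, h23, h32, h34, h43, lie_self] <;>
          first
            | exact Submodule.zero_mem _
            | exact Submodule.subset_span rfl
            | exact Submodule.neg_mem _ (Submodule.subset_span rfl)
      | zero_left v hv => simp
      | zero_right u hu => simp
      | add_left u₁ u₂ v _ _ _ h1 h2 => rw [add_lie]; exact Submodule.add_mem _ h1 h2
      | add_right u v₁ v₂ _ _ _ h1 h2 => rw [lie_add]; exact Submodule.add_mem _ h1 h2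
      | smul_left c u v _ _ h => rw [smul_lie]; exact Submodule.smul_mem _ c h
      | smul_right c u v _ _ h => rw [lie_smul]; exact Submodule.smul_mem _ c h
    have hspan1 : Submodule.span ℝ ({b 1} : Set L) ≤ p :=
      Submodule.span_le.mpr (by simpa using hb1)
    set S : LieSubalgebra ℝ L :=
      { p with lie_mem' := fun {x y} hx hy => hspan1 (hbr x hx y hy) } with hS
    have hSp : S.toSubmodule = p := rfl
    -- range r = p
    have hrange : LinearMap.range r = p := by
      apply le_antisymm
      · rintro x ⟨α, rfl⟩
        rw [hr]
        exact Submodule.sub_mem _ (Submodule.add_mem _ (Submodule.sub_mem _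
          (Submodule.smul_mem _ _ hb2) (Submodule.smul_mem _ _ hb1))
          (Submodule.smul_mem _ _ hb4)) (Submodule.smul_mem _ _ hb3)
      · rw [hp, Submodule.span_le]
        intro x hx
        have hx' : x = b 1 ∨ x = b 2 ∨ x = b 3 ∨ x = b 4 := by simpa using hx
        rcases hx' with rfl | rfl | rfl | rfl
        · exact ⟨-(b.coord 2), by simp [hr, Module.Basis.coord_apply]⟩
        · exact ⟨b.coord 1, by simp [hr, Module.Basis.coord_apply]⟩
        · exact ⟨-(b.coord 4), by simp [hr, Module.Basis.coord_apply]⟩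
        · exact ⟨b.coord 3, by simp [hr, Module.Basis.coord_apply]⟩
    -- triple brackets vanish
    have htriple : ∀ x ∈ p, ∀ y ∈ p, ∀ z : L, ⁅z, ⁅x, y⁆⁆ = 0 := by
      intro x hx y hy z
      obtain ⟨c, hc⟩ := Submodule.mem_span_singleton.mp (hbr x hx y hy)
      rw [← hc, lie_smul, hb1c', smul_zero]
    -- nilpotency
    have hc1 : LieModule.lowerCentralSeries ℝ S S 1 ≤ LieAlgebra.center ℝ S := by
      rw [LieModule.lowerCentralSeries_succ, LieModule.lowerCentralSeries_zero]
      rw [LieSubmodule.lie_le_iff]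
      intro x hx m hm
      rw [LieModule.mem_maxTrivSubmodule]
      intro y
      have h0 : ⁅(y : L), ⁅(x : L), (m : L)⁆⁆ = 0 := htriple _ x.2 _ m.2 _
      exact Subtype.ext (by simpa using h0)
    have hnil : LieRing.IsNilpotent S := by
      refine LieModule.IsNilpotent.mk (R := ℝ) (M := S) (k := 2) ?_
      rw [eq_bot_iff]
      calc LieModule.lowerCentralSeries ℝ S S 2
          = ⁅(⊤ : LieIdeal ℝ S), LieModule.lowerCentralSeries ℝ S S 1⁆ := by
            rw [LieModule.lowerCentralSeries_succ]
        _ ≤ ⁅(⊤ : LieIdeal ℝ S), LieAlgebra.center ℝ S⁆ :=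
            LieSubmodule.mono_lie_right _ hc1
        _ ≤ ⊥ := by
            rw [LieSubmodule.lie_le_iff]
            intro x hx m hm
            have := (LieModule.mem_maxTrivSubmodule ℝ S S m).mp hm x
            simp [this]
    refine ⟨S, hrange.symm, rfl, hnil, ?_⟩
    intro z
    have h1 : IsNilpotent (LieAlgebra.ad ℝ S z) :=
      LieModule.isNilpotent_toEnd_of_isNilpotent ℝ S S z
    exact (LinearMap.isNilpotent_trace_of_isNilpotent h1).eq_zero
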